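/- Let Σ be a type, A ⊆ Σ, and s a finite list over Σ containing at least one element of A. Let v be a real-valued function on lists over Σ that is monotone with respect to the prefix order (if t is a prefix of t' then v(t) ≤ v(t')). Then the minimum of v over the set of prefixes t of s whose A-filtered subsequence equals the A-filtered subsequence of s equals the maximum of v over the set of nonempty prefixes t of s whose last element belongs to A; both sets are finite and nonempty, and both optima equal v(t₀), where t₀ is the longest prefix of s ending with an element of A. -/

import Mathlib

lemma rdropWhile_append_rtakeWhile' {α : Type*} (p : α → Bool) (l : List α) :
    l.rdropWhile p ++ l.rtakeWhile p = l := by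
  rw [List.rdropWhile, List.rtakeWhile, ← List.reverse_append,
    List.takeWhile_append_dropWhile, List.reverse_reverse]

/-- Let `A ⊆ α` and let `s` be a list containing at least one element of
`A`, and let `v` be monotone with respect to the prefix order. Consider
`S1` = prefixes of `s` whose `A`-filtered subsequence equals that of `s`, and
`S2` = nonempty prefixes of `s` whose last element lies in `A`. Then both sets are
finite and nonempty, and `min_{t ∈ S1} v t = max_{t ∈ S2} v t = v t₀`, where `t₀` is
the longest prefix of `s` ending with an element of `A`. -/
theorem min_matching_prefix_eq_max_lastA_prefix {α : Type*} (A : Set α)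
    [DecidablePred (· ∈ A)] (s : List α) (hs : ∃ a ∈ A, a ∈ s)
    (v : List α → ℝ) (hv : ∀ t t' : List α, t <+: t' → v t ≤ v t') :
    let S1 : Set (List α) :=
      {t | t <+: s ∧ t.filter (fun x => decide (x ∈ A)) =
                     s.filter (fun x => decide (x ∈ A))}
    let S2 : Set (List α) :=
      {t | t <+: s ∧ ∃ a ∈ A, ∃ t' : List α, t = t' ++ [a]}
    S1.Finite ∧ S2.Finite ∧ S1.Nonempty ∧ S2.Nonempty ∧
    ∃ t0 ∈ S2, (∀ t ∈ S2, t.length ≤ t0.length) ∧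
      sInf (v '' S1) = v t0 ∧ sSup (v '' S2) = v t0 ∧
      sInf (v '' S1) = sSup (v '' S2) := by
  intro S1 S2
  classical
  -- predicate: not in A
  set p : α → Bool := fun x => !decide (x ∈ A) with hp
  set t0 : List α := s.rdropWhile p with ht0
  set r : List α := s.rtakeWhile p with hr
  have hsplit : t0 ++ r = s := rdropWhile_append_rtakeWhile' p s
  have hrA : ∀ x ∈ r, x ∉ A := by
    intro x hx
    have := List.mem_rtakeWhile_imp hx
    simpa [hp] using this
  have ht0ne : t0 ≠ [] := by
    intro h
    obtain ⟨a, haA, has⟩ := hs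
    have : ∀ x ∈ s, p x := List.rdropWhile_eq_nil_iff.mp h
    have := this a has
    simp [hp, haA] at this
  have ht0pre : t0 <+: s := List.rdropWhile_prefix p s
  obtain ⟨a0, ha0A, t0', ht0eq⟩ : ∃ a ∈ A, ∃ t' : List α, t0 = t' ++ [a] := by
    refine ⟨t0.getLast ht0ne, ?_, t0.dropLast, ?_⟩
    · have hlast : ¬ p (t0.getLast ht0ne) := List.rdropWhile_last_not p s ht0ne
      simpa [hp] using hlast
    · exact (List.dropLast_append_getLast ht0ne).symm
  have ht0S2 : t0 ∈ S2 := ⟨ht0pre, a0, ha0A, t0', ht0eq⟩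
  -- finiteness
  have hpreFin : {t : List α | t <+: s}.Finite := by
    apply Set.Finite.subset s.inits.toFinset.finite_toSet
    intro t ht
    simp only [List.coe_toFinset, Set.mem_setOf_eq, List.mem_inits]
    exact ht
  have hS1fin : S1.Finite := hpreFin.subset fun t ht => ht.1
  have hS2fin : S2.Finite := hpreFin.subset fun t ht => ht.1
  -- t0 ∈ S1
  have hfilr : r.filter (fun x => decide (x ∈ A)) = [] := by
    rw [List.filter_eq_nil_iff]
    intro x hx
    simpa using hrA x hx
  have ht0S1 : t0 ∈ S1 := by
    refine ⟨ht0pre, ?_⟩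
    conv_rhs => rw [← hsplit]
    rw [List.filter_append, hfilr, List.append_nil]
  -- maximality of t0 in S2
  have hmaxlen : ∀ t ∈ S2, t.length ≤ t0.length := by
    rintro t ⟨htpre, a, haA, t', rfl⟩
    by_contra hlt
    push_neg at hlt
    have h01 : t0 <+: t' ++ [a] :=
      List.prefix_of_prefix_length_le ht0pre htpre (le_of_lt hlt)
    obtain ⟨w, hw⟩ := h01
    have hwpre : t0 ++ w <+: t0 ++ r := by rw [hw, hsplit]; exact htpre
    have hwr : w <+: r := (List.prefix_append_right_inj t0).mp hwpre
    have hwne : w ≠ [] := by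
      intro h; rw [h, List.append_nil] at hw
      rw [← hw] at hlt; simp at hlt
    have haw : a ∈ w := by
      have : (t' ++ [a]).getLast (by simp) = (t0 ++ w).getLast (by simp [hwne]) := by
        congr 1; exact hw.symm
      rw [List.getLast_append_of_ne_nil (h₂ := hwne)] at this
      simp only [List.getLast_append_singleton] at this
      rw [this]
      exact List.getLast_mem hwne
    exact hrA a (hwr.subset haw) haA
  -- t0 is a prefix of every element of S1
  have hminpre : ∀ t ∈ S1, t0 <+: t := by
    rintro t ⟨htpre, htfil⟩
    rcases le_or_gt t0.length t.length with hle | hlt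
    · exact List.prefix_of_prefix_length_le ht0pre htpre hle
    · exfalso
      have h01 : t <+: t0 := List.prefix_of_prefix_length_le htpre ht0pre (le_of_lt hlt)
      obtain ⟨w, hw⟩ := h01
      obtain ⟨d, hd⟩ := htpre
      have hfd : d.filter (fun x => decide (x ∈ A)) = [] := by
        have : t.filter (fun x => decide (x ∈ A)) ++ d.filter (fun x => decide (x ∈ A))
            = s.filter (fun x => decide (x ∈ A)) := by
          rw [← List.filter_append, hd]
        rw [htfil] at this
        simpa using List.append_right_eq_self.mp this
      -- a0 is the last element of t0 = t ++ w, and w ≠ [] so a0 ∈ w ⊆ d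
      have hwne : w ≠ [] := by
        intro h; rw [h, List.append_nil] at hw; rw [← hw] at hlt; simp at hlt
      have hwd : w <+: d := by
        have : t ++ w <+: t ++ d := by rw [hw, hd]; exact ht0pre
        exact (List.prefix_append_right_inj t).mp this
      have ha0w : a0 ∈ w := by
        have : (t0' ++ [a0]).getLast (by simp) = (t ++ w).getLast (by simp [hwne]) := by
          congr 1; rw [← ht0eq, hw]
        rw [List.getLast_append_of_ne_nil (h₂ := hwne)] at this
        simp only [List.getLast_append_singleton] at this
        rw [this]
        exact List.getLast_mem hwne
      have : a0 ∈ d := hwd.subset ha0w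
      have := List.filter_eq_nil_iff.mp hfd a0 this
      simp [ha0A] at this
  -- conclude
  have hInf : sInf (v '' S1) = v t0 := by
    apply IsLeast.csInf_eq
    constructor
    · exact ⟨t0, ht0S1, rfl⟩
    · rintro x ⟨t, htS1, rfl⟩
      exact hv _ _ (hminpre t htS1)
  have hSup : sSup (v '' S2) = v t0 := by
    apply IsGreatest.csSup_eq
    constructor
    · exact ⟨t0, ht0S2, rfl⟩
    · rintro x ⟨t, htS2, rfl⟩
      refine hv _ _ (List.prefix_of_prefix_length_le htS2.1 ht0pre (hmaxlen t htS2))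
  exact ⟨hS1fin, hS2fin, ⟨t0, ht0S1⟩, ⟨t0, ht0S2⟩, t0, ht0S2, hmaxlen, hInf, hSup,
    hInf.trans hSup.symm⟩
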